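/- Let λ > 0, d > 0, f(t) = λ θ(t−d) e^{−λ(t−d)}, R(t) = Σ_{k=1}^{∞} f^{⋆k}(t), and define g(t) = λ^{−1} R(t+d) for t ∈ ℝ (so g(t) = 0 for t < 0 and g(0) = 1 as right limit of e^{−λt}). Then for every t > 0 that is not an integer multiple of d, g is differentiable at t and g'(t) = λ g(t−d) − λ g(t). -/

import Mathlib

/-- Convolution of two real functions: `(u ⋆ v)(t) = ∫_ℝ u(s) v(t-s) ds`. -/
noncomputable def conv (u v : ℝ → ℝ) : ℝ → ℝ := fun t => ∫ s : ℝ, u s * v (t - s)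

/-- Convolution powers: `convPow f n = f^{⋆(n+1)}`, i.e. `convPow f 0 = f`. -/
noncomputable def convPow (f : ℝ → ℝ) : ℕ → ℝ → ℝ
  | 0 => f
  | n + 1 => conv (convPow f n) f

open MeasureTheory Set

lemma convPow_closed (lam d : ℝ) (hlam : 0 < lam) (hd : 0 < d) (f : ℝ → ℝ)
    (hf : ∀ t, f t = if d ≤ t then lam * Real.exp (-lam * (t - d)) else 0) :
    ∀ n t, convPow f n t =
      if ((n : ℝ) + 1) * d ≤ t then
        lam ^ (n + 1) * (t - ((n : ℝ) + 1) * d) ^ n / n.factorial *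
          Real.exp (-lam * (t - ((n : ℝ) + 1) * d))
      else 0 := by
  intro n
  induction n with
  | zero =>
    intro t
    simp only [convPow, hf t, Nat.cast_zero, zero_add, one_mul, pow_one, pow_zero,
      Nat.factorial_zero, Nat.cast_one, mul_one, div_one]
  | succ n ih =>
    intro t
    have key : convPow f (n + 1) t = ∫ s : ℝ, convPow f n s * f (t - s) := rfl
    set a : ℝ := ((n : ℝ) + 1) * d with ha
    set b : ℝ := t - d with hb
    set C : ℝ := lam ^ (n + 2) / n.factorial * Real.exp (-lam * (t - ((n : ℝ) + 2) * d)) with hC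
    have hint : (fun s : ℝ => convPow f n s * f (t - s)) =
        Set.indicator (Set.Icc a b) (fun s => C * (s - a) ^ n) := by
      funext s
      by_cases hs : s ∈ Set.Icc a b
      · rw [Set.indicator_of_mem hs]
        obtain ⟨hs1, hs2⟩ := hs
        rw [ih s, if_pos hs1, hf (t - s), if_pos (by rw [hb] at hs2; linarith)]
        have hexp : Real.exp (-lam * (t - ((n : ℝ) + 2) * d)) =
            Real.exp (-lam * (s - a)) * Real.exp (-lam * (t - s - d)) := by
          rw [← Real.exp_add]; congr 1; rw [ha]; ring
        rw [hC, hexp]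
        ring
      · rw [Set.indicator_of_notMem hs]
        rw [Set.mem_Icc, not_and_or] at hs
        rcases hs with hs | hs
        · rw [ih s, if_neg (by rw [ha] at hs ⊢; push_neg at hs; linarith), zero_mul]
        · rw [hf (t - s), if_neg (by rw [hb] at hs; push_neg at hs; intro h; linarith), mul_zero]
    rw [key, hint, MeasureTheory.integral_indicator measurableSet_Icc]
    by_cases hcase : ((n : ℝ) + 1 + 1) * d ≤ t
    · have hab : a ≤ b := by rw [ha, hb]; nlinarith
      rw [MeasureTheory.integral_Icc_eq_integral_Ioc,
        ← intervalIntegral.integral_of_le hab, intervalIntegral.integral_const_mul]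
      have hsub : ∫ s in a..b, (s - a) ^ n = (b - a) ^ (n + 1) / (n + 1) := by
        rw [intervalIntegral.integral_comp_sub_right (fun x => x ^ n) a]
        simp [integral_pow]
      rw [hsub]
      push_cast [Nat.factorial_succ]
      rw [if_pos hcase, hC]
      have hba : b - a = t - ((n : ℝ) + 1 + 1) * d := by rw [ha, hb]; ring
      rw [hba]
      have h1 : (n.factorial : ℝ) ≠ 0 := Nat.cast_ne_zero.mpr n.factorial_ne_zero
      have h2 : ((n : ℝ) + 1) ≠ 0 := by positivity
      have : ((n : ℝ) + 2) = ((n : ℝ) + 1 + 1) := by ring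
      rw [this]
      field_simp
    · have : Set.Icc a b = ∅ := by
        apply Set.Icc_eq_empty
        rw [ha, hb]; intro h; push_neg at hcase; nlinarith
      rw [this]
      push_cast
      rw [if_neg hcase]
      simp

noncomputable def Pfun (lam d : ℝ) (n : ℕ) (x : ℝ) : ℝ :=
  lam ^ n * (x - n * d) ^ n / n.factorial * Real.exp (-lam * (x - n * d))

lemma hasDerivAt_Pfun (lam d : ℝ) (n : ℕ) (t : ℝ) :
    HasDerivAt (Pfun lam d n)
      (lam ^ n * ((n : ℝ) * (t - n * d) ^ (n - 1)) / n.factorial *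
        Real.exp (-lam * (t - n * d)) - lam * Pfun lam d n t) t := by
  have h1 : HasDerivAt (fun x : ℝ => x - (n : ℝ) * d) 1 t := (hasDerivAt_id t).sub_const _
  have h2 : HasDerivAt (fun x : ℝ => (x - (n : ℝ) * d) ^ n) ((n : ℝ) * (t - n * d) ^ (n - 1) * 1) t := h1.pow n
  have h3 : HasDerivAt (fun x : ℝ => -lam * (x - (n : ℝ) * d)) (-lam * 1) t := h1.const_mul (-lam)
  have h4 := h3.exp
  have h5 := h2.fun_mul h4
  have h6 := h5.const_mul (lam ^ n / n.factorial)
  have heq : (fun x : ℝ => lam ^ n / n.factorial *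
      ((x - (n : ℝ) * d) ^ n * Real.exp (-lam * (x - (n : ℝ) * d)))) = Pfun lam d n := by
    funext x; unfold Pfun; ring
  rw [heq] at h6
  refine h6.congr_deriv ?_
  unfold Pfun
  ring

lemma Pfun_shift (lam d : ℝ) (n : ℕ) (t : ℝ) :
    lam ^ (n + 1) * (((n : ℝ) + 1) * (t - ((n : ℝ) + 1) * d) ^ n) / (n + 1).factorial *
      Real.exp (-lam * (t - ((n : ℝ) + 1) * d)) = lam * Pfun lam d n (t - d) := by
  unfold Pfun
  have : t - d - (n : ℝ) * d = t - ((n : ℝ) + 1) * d := by ring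
  rw [this]
  push_cast [Nat.factorial_succ]
  have h1 : (n.factorial : ℝ) ≠ 0 := Nat.cast_ne_zero.mpr n.factorial_ne_zero
  have h2 : ((n : ℝ) + 1) ≠ 0 := by positivity
  field_simp
  ring

/-- with `f(t) = lam·θ(t-d)·e^{-lam(t-d)}`, `R(t) = Σ_{k≥1} f^{⋆k}(t)` and
`g(t) = lam⁻¹ R(t+d)`, the fundamental solution `g` satisfies the delay differential
equation `g'(t) = lam·g(t-d) - lam·g(t)` at every `t > 0` which is not an integer
multiple of `d`. -/
theorem stmt_3 (lam d : ℝ) (hlam : 0 < lam) (hd : 0 < d)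
    (f R g : ℝ → ℝ)
    (hf : ∀ t : ℝ, f t = if d ≤ t then lam * Real.exp (-lam * (t - d)) else 0)
    (hR : ∀ t : ℝ, R t = ∑' n : ℕ, convPow f n t)
    (hg : ∀ t : ℝ, g t = lam⁻¹ * R (t + d)) :
    ∀ t : ℝ, 0 < t → (∀ n : ℕ, t ≠ (n : ℝ) * d) →
      HasDerivAt g (lam * g (t - d) - lam * g t) t := by
  have hlam0 : lam ≠ 0 := ne_of_gt hlam
  -- closed form for g
  have hg' : ∀ x : ℝ, g x = ∑' n : ℕ, (if (n : ℝ) * d ≤ x then Pfun lam d n x else 0) := by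
    intro x
    rw [hg, hR, ← tsum_mul_left]
    congr 1
    funext n
    rw [convPow_closed lam d hlam hd f hf n (x + d)]
    have hiff : ((n : ℝ) + 1) * d ≤ x + d ↔ (n : ℝ) * d ≤ x := by constructor <;> intro h <;> nlinarith
    by_cases hc : (n : ℝ) * d ≤ x
    · rw [if_pos (hiff.mpr hc), if_pos hc]
      have : x + d - ((n : ℝ) + 1) * d = x - n * d := by ring
      rw [this]
      unfold Pfun
      rw [pow_succ]
      field_simp
    · rw [if_neg (fun h => hc (hiff.mp h)), if_neg hc, mul_zero]
  -- finite sum form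
  have hgsum : ∀ (M : ℕ) (x : ℝ), x < (M : ℝ) * d →
      g x = ∑ n ∈ Finset.range M, (if (n : ℝ) * d ≤ x then Pfun lam d n x else 0) := by
    intro M x hx
    rw [hg' x]
    apply tsum_eq_sum
    intro n hn
    rw [Finset.mem_range, not_lt] at hn
    rw [if_neg]
    intro h
    have : (M : ℝ) ≤ (n : ℝ) := Nat.cast_le.mpr hn
    nlinarith
  intro t ht hne
  set N : ℕ := Nat.floor (t / d) with hN
  have hNd : (N : ℝ) * d < t := by
    have h1 : (N : ℝ) ≤ t / d := Nat.floor_le (by positivity)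
    have h2 : (N : ℝ) * d ≤ t := by
      rw [← div_mul_cancel₀ t (ne_of_gt hd)]
      exact mul_le_mul_of_nonneg_right h1 hd.le
    exact lt_of_le_of_ne h2 (Ne.symm (hne N))
  have hNd' : t < ((N : ℝ) + 1) * d := by
    have h1 : t / d < (N : ℝ) + 1 := Nat.lt_floor_add_one (t / d)
    calc t = t / d * d := by field_simp
    _ < ((N : ℝ) + 1) * d := by exact mul_lt_mul_of_pos_right h1 hd
  -- g equals h on a neighborhood of t
  set h : ℝ → ℝ := fun x => ∑ n ∈ Finset.range (N + 1), Pfun lam d n x with hh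
  have hgh : ∀ x ∈ Set.Ioo ((N : ℝ) * d) (((N : ℝ) + 1) * d), g x = h x := by
    intro x hx
    rw [hgsum (N + 1) x (by push_cast; exact hx.2)]
    apply Finset.sum_congr rfl
    intro n hn
    rw [Finset.mem_range, Nat.lt_succ_iff] at hn
    rw [if_pos]
    calc (n : ℝ) * d ≤ (N : ℝ) * d :=
      mul_le_mul_of_nonneg_right (Nat.cast_le.mpr hn) hd.le
    _ ≤ x := hx.1.le
  have hev : g =ᶠ[nhds t] h :=
    Filter.eventuallyEq_of_mem (Ioo_mem_nhds hNd hNd') hgh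
  -- derivative of h
  have hderiv : HasDerivAt h (∑ n ∈ Finset.range (N + 1),
      (lam ^ n * ((n : ℝ) * (t - n * d) ^ (n - 1)) / n.factorial *
        Real.exp (-lam * (t - n * d)) - lam * Pfun lam d n t)) t :=
    HasDerivAt.fun_sum fun n _ => hasDerivAt_Pfun lam d n t
  have hgt : g t = ∑ n ∈ Finset.range (N + 1), Pfun lam d n t :=
    hgh t ⟨hNd, hNd'⟩
  have hgtd : g (t - d) = ∑ n ∈ Finset.range N, Pfun lam d n (t - d) := by
    rw [hgsum N (t - d) (by linarith)]
    apply Finset.sum_congr rfl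
    intro n hn
    rw [Finset.mem_range] at hn
    rw [if_pos]
    have : ((n : ℝ) + 1) * d ≤ (N : ℝ) * d := by
      apply mul_le_mul_of_nonneg_right _ hd.le
      have hc : ((n : ℝ) + 1) ≤ (N : ℝ) := by exact_mod_cast Nat.succ_le_of_lt hn
      linarith
    linarith
  -- value of the derivative
  have hval : (∑ n ∈ Finset.range (N + 1),
      (lam ^ n * ((n : ℝ) * (t - n * d) ^ (n - 1)) / n.factorial *
        Real.exp (-lam * (t - n * d)) - lam * Pfun lam d n t)) =
      lam * g (t - d) - lam * g t := by
    rw [Finset.sum_sub_distrib, ← Finset.mul_sum, ← hgt, hgtd, Finset.mul_sum]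
    congr 1
    rw [Finset.sum_range_succ']
    have hzero : lam ^ 0 * ((0 : ℕ) * (t - (0 : ℕ) * d) ^ (0 - 1)) / (Nat.factorial 0) *
        Real.exp (-lam * (t - (0 : ℕ) * d)) = 0 := by norm_num
    rw [hzero, add_zero]
    apply Finset.sum_congr rfl
    intro n _
    have hps := Pfun_shift lam d n t
    simp only [Nat.add_sub_cancel]
    push_cast at hps ⊢
    linarith [hps]
  rw [← hval]
  exact hderiv.congr_of_eventuallyEq hev
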